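/- Let q ∈ B_n be balanced and let f ∈ B_n be arbitrary. Then the average over GL_n of the squared q-transform coefficients satisfies Σ_{A ∈ GL_n} W_q(f)(A)² = |GL_n| · (2^(2n) − I_f²)/(2^n − 1), where |GL_n| = (2^n−1)(2^n−2)(2^n−4)···(2^n−2^(n−1)). -/

import Mathlib

open Finset Matrix

/-- Hamming weight of a Boolean function on `𝔽₂ⁿ`. -/
def wt {n : ℕ} (f : (Fin n → ZMod 2) → ZMod 2) : ℕ :=
  (Finset.univ.filter fun a => f a = 1).card

/-- Imbalance `I_f = Σ_a (-1)^{f(a)}`. -/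
def imb {n : ℕ} (f : (Fin n → ZMod 2) → ZMod 2) : ℤ :=
  ∑ a : Fin n → ZMod 2, (-1 : ℤ) ^ (f a).val

/-- q-transform coefficient `W_q(f)(A) = Σ_a (-1)^{f(a)+q(aA)}` (for `A` a matrix;
invertibility is imposed at use sites via `GL`). -/
def Wq {n : ℕ} (q f : (Fin n → ZMod 2) → ZMod 2)
    (A : Matrix (Fin n) (Fin n) (ZMod 2)) : ℤ :=
  ∑ a : Fin n → ZMod 2, (-1 : ℤ) ^ (f a + q (Matrix.vecMul a A)).val

/-- `ρ_q = ⌈ ((2^{2n} - I_q²)/(2^n - 1))^{1/2} ⌉`. -/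
noncomputable def rho {n : ℕ} (q : (Fin n → ZMod 2) → ZMod 2) : ℤ :=
  ⌈Real.sqrt (((2 : ℝ) ^ (2 * n) - (imb q : ℝ) ^ 2) / ((2 : ℝ) ^ n - 1))⌉

/-- `f` is affine: `f(x) = v·x + c`. -/
def IsAffine {n : ℕ} (f : (Fin n → ZMod 2) → ZMod 2) : Prop :=
  ∃ (v : Fin n → ZMod 2) (c : ZMod 2), ∀ x, f x = (∑ i, v i * x i) + c

lemma hsign : ∀ x y : ZMod 2, ((-1:ℝ))^((x+y).val) = (-1)^x.val * (-1)^y.val := by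
  intro x y
  rcases (by decide : ∀ z : ZMod 2, z = 0 ∨ z = 1) x with rfl | rfl <;>
  rcases (by decide : ∀ z : ZMod 2, z = 0 ∨ z = 1) y with rfl | rfl <;>
    norm_num [show ((2:ZMod 2)).val = 0 from rfl, show ((1:ZMod 2)).val = 1 from rfl]

lemma hsq (v : ℕ) : ((-1:ℝ)^v) * ((-1)^v) = 1 := by
  rw [← pow_add, ← two_mul, pow_mul]; norm_num


open Finset Matrix

lemma extend_li {n : ℕ} (d : ℕ) : ∀ (k : ℕ), k + d = n →
    ∀ (u : Fin k → (Fin n → ZMod 2)), LinearIndependent (ZMod 2) u →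
    ∃ w : Fin n → (Fin n → ZMod 2), LinearIndependent (ZMod 2) w ∧
      ∀ (i : Fin n) (h : i.val < k), w i = u ⟨i.val, h⟩ := by
  induction d with
  | zero =>
    intro k hk u hu
    subst hk
    refine ⟨fun i => u ⟨i.val, by omega⟩, ?_, fun i h => rfl⟩
    have : (fun i : Fin (k+0) => u ⟨i.val, by omega⟩) = u ∘ (fun i => (⟨i.val, by omega⟩ : Fin k)) := rfl
    convert hu.comp (fun i : Fin (k+0) => (⟨i.val, by omega⟩ : Fin k)) ?_
    intro i j hij
    simp only [Fin.mk.injEq] at hij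
    exact Fin.ext hij
  | succ d ih =>
    intro k hk u hu
    have hkn : k < n := by omega
    have hfr : Module.finrank (ZMod 2) (Fin n → ZMod 2) = n := by
      simp [Module.finrank_fintype_fun_eq_card]
    obtain ⟨x, hx⟩ := exists_linearIndependent_snoc_of_lt_finrank hu (by rw [hfr]; exact hkn)
    obtain ⟨w, hw, hwa⟩ := ih (k+1) (by omega) (Fin.snoc u x) hx
    refine ⟨w, hw, fun i h => ?_⟩
    have := hwa i (by omega)
    rw [this]
    have : (⟨i.val, by omega⟩ : Fin (k+1)) = Fin.castSucc ⟨i.val, h⟩ := rfl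
    rw [this, Fin.snoc_castSucc]

lemma gl_trans {n k : ℕ} (u v : Fin k → (Fin n → ZMod 2))
    (hu : LinearIndependent (ZMod 2) u) (hv : LinearIndependent (ZMod 2) v) (hn : 0 < n) :
    ∃ M : GL (Fin n) (ZMod 2), ∀ i, Matrix.vecMul (u i) M.val = v i := by
  have : Nonempty (Fin n) := Fin.pos_iff_nonempty.1 hn
  have hk : k ≤ n := by
    have := hu.fintype_card_le_finrank
    simpa [Module.finrank_fintype_fun_eq_card] using this
  obtain ⟨wu, hwu, hwua⟩ := extend_li (n - k) k (by omega) u hu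
  obtain ⟨wv, hwv, hwva⟩ := extend_li (n - k) k (by omega) v hv
  have hcard : Fintype.card (Fin n) = Module.finrank (ZMod 2) (Fin n → ZMod 2) := by
    simp [Module.finrank_fintype_fun_eq_card]
  let Bu := basisOfLinearIndependentOfCardEqFinrank hwu hcard
  let Bv := basisOfLinearIndependentOfCardEqFinrank hwv hcard
  let e : (Fin n → ZMod 2) ≃ₗ[ZMod 2] (Fin n → ZMod 2) := Bu.equiv Bv (Equiv.refl _)
  have he : ∀ i : Fin n, e (wu i) = wv i := by
    intro i
    have h1 : wu i = Bu i := by rw [coe_basisOfLinearIndependentOfCardEqFinrank]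
    have h2 : wv i = Bv i := by rw [coe_basisOfLinearIndependentOfCardEqFinrank]
    rw [h1, h2, Module.Basis.equiv_apply, Equiv.refl_apply]
  let T := LinearMap.toMatrix' (e : (Fin n → ZMod 2) →ₗ[ZMod 2] (Fin n → ZMod 2))
  let S := LinearMap.toMatrix' (e.symm : (Fin n → ZMod 2) →ₗ[ZMod 2] (Fin n → ZMod 2))
  have hTS : S * T = 1 := by
    rw [← LinearMap.toMatrix'_comp]
    have : (e.symm : (Fin n → ZMod 2) →ₗ[ZMod 2] _).comp (e : (Fin n → ZMod 2) →ₗ[ZMod 2] _) = LinearMap.id := by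
      ext x
      simp
    rw [this, LinearMap.toMatrix'_id]
  have hST : T * S = 1 := by
    rw [← LinearMap.toMatrix'_comp]
    have : (e : (Fin n → ZMod 2) →ₗ[ZMod 2] _).comp (e.symm : (Fin n → ZMod 2) →ₗ[ZMod 2] _) = LinearMap.id := by
      ext x
      simp
    rw [this, LinearMap.toMatrix'_id]
  refine ⟨⟨Tᵀ, Sᵀ, ?_, ?_⟩, ?_⟩
  · rw [← Matrix.transpose_mul, hTS, Matrix.transpose_one]
  · rw [← Matrix.transpose_mul, hST, Matrix.transpose_one]
  · intro i
    show Matrix.vecMul (u i) Tᵀ = v i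
    rw [Matrix.vecMul_transpose, ← Matrix.toLin'_apply, Matrix.toLin'_toMatrix']
    have hui : u i = wu ⟨i.val, by omega⟩ := (hwua ⟨i.val, by omega⟩ i.isLt).symm
    have hvi : v i = wv ⟨i.val, by omega⟩ := (hwva ⟨i.val, by omega⟩ i.isLt).symm
    rw [hui, hvi]
    exact he _

open Finset Matrix

lemma li_single {n : ℕ} {a : Fin n → ZMod 2} (ha : a ≠ 0) :
    LinearIndependent (ZMod 2) ![a] := by
  apply linearIndependent_unique_iff.2
  simpa using ha

lemma li_pair {n : ℕ} {a b : Fin n → ZMod 2} (ha : a ≠ 0) (hb : b ≠ 0) (hab : a ≠ b) :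
    LinearIndependent (ZMod 2) ![a, b] := by
  apply LinearIndependent.pair_iff.2
  intro s t hst
  have h01 : ∀ z : ZMod 2, z = 0 ∨ z = 1 := by decide
  have hs := h01 s
  have ht := h01 t
  rcases hs with rfl | rfl <;> rcases ht with rfl | rfl
  · exact ⟨rfl, rfl⟩
  · simp only [zero_smul, one_smul, zero_add] at hst; exact absurd hst hb
  · simp only [zero_smul, one_smul, add_zero] at hst; exact absurd hst ha
  · exfalso
    simp only [one_smul] at hst
    apply hab
    have : a = -b := eq_neg_of_add_eq_zero_left hst
    rw [this]
    ext i
    have : ∀ x : ZMod 2, -x = x := by decide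
    simp [this]

lemma fiber_sum {α β : Type*} [Fintype α] [DecidableEq β] (φ : α → β) (T : Finset β)
    (hT : ∀ x, φ x ∈ T)
    (hc : ∀ t ∈ T, ∀ t' ∈ T,
      (Finset.univ.filter fun x => φ x = t).card = (Finset.univ.filter fun x => φ x = t').card)
    (g : β → ℝ) :
    ∑ x, g (φ x) = (Fintype.card α : ℝ) / T.card * ∑ t ∈ T, g t := by
  rcases T.eq_empty_or_nonempty with rfl | ⟨t₀, ht₀⟩
  · have : IsEmpty α := ⟨fun x => by simpa using hT x⟩
    simp [Fintype.card_eq_zero]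
  · set c := (Finset.univ.filter fun x => φ x = t₀).card with hcdef
    have hfib : ∀ t ∈ T, (Finset.univ.filter fun x => φ x = t).card = c := fun t ht => hc t ht t₀ ht₀
    have hsum : ∑ x, g (φ x) = ∑ t ∈ T, (c : ℝ) * g t := by
      rw [← Finset.sum_fiberwise_of_maps_to (fun x _ => hT x) (fun x => g (φ x))]
      refine Finset.sum_congr rfl fun t ht => ?_
      rw [Finset.sum_congr rfl (fun x hx => by
        rw [(Finset.mem_filter.1 hx).2]), Finset.sum_const, nsmul_eq_mul, hfib t ht]
    have hcard : Fintype.card α = T.card * c := by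
      rw [← Finset.card_univ, Finset.card_eq_sum_card_fiberwise (fun x _ => hT x),
        Finset.sum_congr rfl hfib, Finset.sum_const, smul_eq_mul]
    rw [hsum, hcard, ← Finset.mul_sum]
    push_cast
    have hTc : (T.card : ℝ) ≠ 0 := by
      exact_mod_cast Finset.card_ne_zero_of_mem ht₀
    field_simp

open Finset Matrix

variable {n : ℕ}

abbrev V (n : ℕ) := Fin n → ZMod 2

lemma vecMul_injective (A : GL (Fin n) (ZMod 2)) {a b : V n}
    (h : Matrix.vecMul a A.val = Matrix.vecMul b A.val) : a = b := by
  have h2 := congrArg (fun x => Matrix.vecMul x (A⁻¹ : GL (Fin n) (ZMod 2)).val) h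
  simp only [Matrix.vecMul_vecMul, ← Units.val_mul, mul_inv_cancel, Units.val_one,
    Matrix.vecMul_one] at h2
  exact h2

lemma vecMul_ne_zero (A : GL (Fin n) (ZMod 2)) {b : V n} (hb : b ≠ 0) :
    Matrix.vecMul b A.val ≠ 0 := by
  intro h
  apply hb
  apply vecMul_injective A
  rw [h, Matrix.zero_vecMul]

lemma fiber_card_eq {k : ℕ} (u : Fin k → V n) (hn : 0 < n)
    {c c' : Fin k → V n} (hc : LinearIndependent (ZMod 2) c)
    (hc' : LinearIndependent (ZMod 2) c') :
    (Finset.univ.filter fun A : GL (Fin n) (ZMod 2) =>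
        (fun i => Matrix.vecMul (u i) A.val) = c).card =
    (Finset.univ.filter fun A : GL (Fin n) (ZMod 2) =>
        (fun i => Matrix.vecMul (u i) A.val) = c').card := by
  obtain ⟨M, hM⟩ := gl_trans c c' hc hc' hn
  apply Finset.card_bij' (fun A _ => A * M) (fun B _ => B * M⁻¹)
  · intro A hA
    simp only [Finset.mem_filter, Finset.mem_univ, true_and] at hA ⊢
    funext i
    have : Matrix.vecMul (u i) A.val = c i := congrFun hA i
    show Matrix.vecMul (u i) (A * M).val = c' i
    rw [Units.val_mul, ← Matrix.vecMul_vecMul, this, hM]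
  · intro B hB
    simp only [Finset.mem_filter, Finset.mem_univ, true_and] at hB ⊢
    funext i
    have h1 : Matrix.vecMul (u i) B.val = c' i := congrFun hB i
    show Matrix.vecMul (u i) (B * M⁻¹).val = c i
    rw [Units.val_mul, ← Matrix.vecMul_vecMul, h1, ← hM i, Matrix.vecMul_vecMul,
      ← Units.val_mul]
    simp
  · intro A _; rw [mul_inv_cancel_right]
  · intro B _; rw [inv_mul_cancel_right]

lemma sum_single {n : ℕ} (hn : 0 < n) {b : V n} (hb : b ≠ 0) (g : V n → ℝ) :
    ∑ A : GL (Fin n) (ZMod 2), g (Matrix.vecMul b A.val) =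
      (Fintype.card (GL (Fin n) (ZMod 2)) : ℝ) /
          ((Finset.univ.filter fun c : V n => c ≠ 0).card) *
        ∑ c ∈ Finset.univ.filter (fun c : V n => c ≠ 0), g c := by
  apply fiber_sum (fun A : GL (Fin n) (ZMod 2) => Matrix.vecMul b A.val)
  · intro A
    simp only [Finset.mem_filter, Finset.mem_univ, true_and]
    exact vecMul_ne_zero A hb
  · intro t ht t' ht'
    simp only [Finset.mem_filter, Finset.mem_univ, true_and] at ht ht'
    have key := fiber_card_eq ![b] hn (li_single ht) (li_single ht')
    have e1 : ∀ t₀ : V n, (Finset.univ.filter fun A : GL (Fin n) (ZMod 2) =>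
        Matrix.vecMul b A.val = t₀) = (Finset.univ.filter fun A : GL (Fin n) (ZMod 2) =>
        (fun i => Matrix.vecMul (![b] i) A.val) = ![t₀]) := by
      intro t₀
      apply Finset.filter_congr
      intro A _
      simp [funext_iff, Fin.forall_fin_one]
    rw [e1 t, e1 t']
    exact key

lemma sum_pair {n : ℕ} (hn : 0 < n) {a b : V n} (ha : a ≠ 0) (hb : b ≠ 0) (hab : a ≠ b)
    (g : V n × V n → ℝ) :
    ∑ A : GL (Fin n) (ZMod 2), g (Matrix.vecMul a A.val, Matrix.vecMul b A.val) =
      (Fintype.card (GL (Fin n) (ZMod 2)) : ℝ) /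
          ((Finset.univ.filter fun c : V n => c ≠ 0).offDiag.card) *
        ∑ p ∈ (Finset.univ.filter fun c : V n => c ≠ 0).offDiag, g p := by
  apply fiber_sum (fun A : GL (Fin n) (ZMod 2) =>
    (Matrix.vecMul a A.val, Matrix.vecMul b A.val))
  · intro A
    rw [Finset.mem_offDiag]
    refine ⟨by simp [vecMul_ne_zero A ha], by simp [vecMul_ne_zero A hb], fun h => hab ?_⟩
    exact vecMul_injective A h
  · intro t ht t' ht'
    rw [Finset.mem_offDiag] at ht ht'
    simp only [Finset.mem_filter, Finset.mem_univ, true_and] at ht ht'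
    have key := fiber_card_eq ![a, b] hn
      (li_pair ht.1 ht.2.1 ht.2.2) (li_pair ht'.1 ht'.2.1 ht'.2.2)
    have e1 : ∀ t₀ : V n × V n, (Finset.univ.filter fun A : GL (Fin n) (ZMod 2) =>
        (Matrix.vecMul a A.val, Matrix.vecMul b A.val) = t₀) =
        (Finset.univ.filter fun A : GL (Fin n) (ZMod 2) =>
        (fun i => Matrix.vecMul (![a, b] i) A.val) = ![t₀.1, t₀.2]) := by
      intro t₀
      apply Finset.filter_congr
      intro A _
      simp [funext_iff, Fin.forall_fin_two, Prod.ext_iff]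
    rw [e1 t, e1 t']
    have h2 : ![t.1, t.2] = (fun i => ![t.1, t.2] i) := rfl
    convert key

lemma card_nonzero {n : ℕ} :
    (Finset.univ.filter fun c : V n => c ≠ 0).card = 2 ^ n - 1 := by
  rw [Finset.filter_ne' Finset.univ 0, Finset.card_erase_of_mem (Finset.mem_univ 0),
    Finset.card_univ]
  simp [Fintype.card_fun]

lemma balanced_sum {n : ℕ} (hn : 0 < n) (q : V n → ZMod 2) (hq : wt q = 2 ^ (n - 1)) :
    ∑ c : V n, ((-1:ℝ)) ^ (q c).val = 0 := by
  classical
  rw [← Finset.sum_filter_add_sum_filter_not Finset.univ (fun c => q c = 1)]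
  have e1 : ∀ c ∈ Finset.univ.filter (fun c : V n => q c = 1),
      ((-1:ℝ)) ^ (q c).val = -1 := by
    intro c hc
    rw [(Finset.mem_filter.1 hc).2]
    norm_num [show ((1:ZMod 2)).val = 1 from rfl]
  have e2 : ∀ c ∈ Finset.univ.filter (fun c : V n => ¬ q c = 1),
      ((-1:ℝ)) ^ (q c).val = 1 := by
    intro c hc
    have h01 : ∀ z : ZMod 2, z = 0 ∨ z = 1 := by decide
    rcases h01 (q c) with h | h
    · rw [h]; norm_num [show ((0:ZMod 2)).val = 0 from rfl]
    · exact absurd h (Finset.mem_filter.1 hc).2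
  rw [Finset.sum_congr rfl e1, Finset.sum_congr rfl e2, Finset.sum_const, Finset.sum_const,
    nsmul_eq_mul, nsmul_eq_mul, mul_neg_one, mul_one]
  have hcard1 : (Finset.univ.filter (fun c : V n => q c = 1)).card = 2 ^ (n-1) := hq
  have hcard2 : (Finset.univ.filter (fun c : V n => ¬ q c = 1)).card = 2^n - 2^(n-1) := by
    rw [Finset.filter_not, Finset.card_sdiff_of_subset (Finset.filter_subset _ _), Finset.card_univ,
      hcard1]
    congr 1
    simp [Fintype.card_fun]
  rw [hcard1, hcard2, Nat.cast_sub (Nat.pow_le_pow_right (by norm_num) (by omega))]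
  have h3 : (2:ℝ) ^ n = 2 * 2 ^ (n - 1) := by
    rw [← pow_succ']
    congr 1
    omega
  push_cast
  rw [h3]
  ring

lemma T_offdiag {n : ℕ} (hn : 0 < n) (q : V n → ZMod 2)
    (hbal : ∑ c : V n, ((-1:ℝ)) ^ (q c).val = 0) {a b : V n} (hab : a ≠ b) :
    ∑ A : GL (Fin n) (ZMod 2),
        ((-1:ℝ)) ^ (q (Matrix.vecMul a A.val)).val * ((-1:ℝ)) ^ (q (Matrix.vecMul b A.val)).val
      = -((Fintype.card (GL (Fin n) (ZMod 2)) : ℝ) / ((2:ℝ)^n - 1)) := by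
  classical
  set Q : V n → ℝ := fun c => ((-1:ℝ)) ^ (q c).val with hQ
  set S : Finset (V n) := Finset.univ.filter (fun c : V n => c ≠ 0) with hS
  have hmR : ((S.card : ℝ)) = (2:ℝ)^n - 1 := by
    rw [hS, card_nonzero, Nat.cast_sub Nat.one_le_two_pow]
    push_cast
    ring
  have hm0 : ((2:ℝ)^n - 1) ≠ 0 := by
    have : (2:ℝ)^n ≥ 2^1 := by
      apply pow_le_pow_right₀ (by norm_num) (by omega)
    norm_num at this ⊢
    nlinarith
  have hS0 : ∑ c ∈ S, Q c = -Q 0 := by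
    have h1 : ∑ c ∈ Finset.univ.erase 0, Q c + Q 0 = ∑ c : V n, Q c :=
      Finset.sum_erase_add _ _ (Finset.mem_univ 0)
    rw [hQ] at h1 ⊢
    rw [hS, Finset.filter_ne' Finset.univ 0]
    simp only [hbal] at h1
    linarith
  have hQsq : ∀ c, Q c * Q c = 1 := fun c => hsq _
  set N : ℝ := (Fintype.card (GL (Fin n) (ZMod 2)) : ℝ) with hN
  by_cases ha : a = 0
  · have hb : b ≠ 0 := fun h => hab (by rw [ha, h])
    have key := sum_single hn hb (fun c => Q 0 * Q c)
    calc ∑ A : GL (Fin n) (ZMod 2), Q (Matrix.vecMul a A.val) * Q (Matrix.vecMul b A.val)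
        = ∑ A : GL (Fin n) (ZMod 2), Q 0 * Q (Matrix.vecMul b A.val) := by
          apply Finset.sum_congr rfl
          intro A _
          rw [ha, Matrix.zero_vecMul]
      _ = N / (S.card) * ∑ c ∈ S, Q 0 * Q c := key
      _ = N / ((2:ℝ)^n - 1) * (Q 0 * ∑ c ∈ S, Q c) := by rw [hmR, ← Finset.mul_sum]
      _ = -(N / ((2:ℝ)^n - 1)) := by rw [hS0, mul_neg, hQsq]; ring
  · by_cases hb : b = 0
    · have ha' : a ≠ 0 := ha
      have key := sum_single hn ha' (fun c => Q c * Q 0)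
      calc ∑ A : GL (Fin n) (ZMod 2), Q (Matrix.vecMul a A.val) * Q (Matrix.vecMul b A.val)
          = ∑ A : GL (Fin n) (ZMod 2), Q (Matrix.vecMul a A.val) * Q 0 := by
            apply Finset.sum_congr rfl
            intro A _
            rw [hb, Matrix.zero_vecMul]
        _ = N / (S.card) * ∑ c ∈ S, Q c * Q 0 := key
        _ = N / ((2:ℝ)^n - 1) * ((∑ c ∈ S, Q c) * Q 0) := by rw [hmR, ← Finset.sum_mul]
        _ = -(N / ((2:ℝ)^n - 1)) := by rw [hS0, neg_mul, hQsq]; ring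
    · -- both nonzero
      have haS : a ∈ S := by rw [hS]; simp [ha]
      have hbS : b ∈ S := by rw [hS]; simp [hb]
      have h2le : 1 < S.card := Finset.one_lt_card.2 ⟨a, haS, b, hbS, hab⟩
      have hm1 : ((2:ℝ)^n - 1) - 1 ≠ 0 := by
        have : (1:ℝ) < (S.card : ℝ) := by exact_mod_cast h2le
        rw [hmR] at this
        linarith
      have key := sum_pair hn ha hb hab (fun p : V n × V n => Q p.1 * Q p.2)
      simp only at key
      have hoffR : ((S.offDiag.card : ℝ)) = ((2:ℝ)^n - 1) * (((2:ℝ)^n - 1) - 1) := by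
        rw [Finset.offDiag_card]
        have hle : S.card ≤ S.card * S.card := Nat.le_mul_of_pos_left _ (by omega)
        rw [Nat.cast_sub hle]
        push_cast [hmR]
        ring
      have hsum_off : ∑ p ∈ S.offDiag, Q p.1 * Q p.2 = 1 - ((2:ℝ)^n - 1) := by
        have hprod : ∑ p ∈ S ×ˢ S, Q p.1 * Q p.2 = (∑ c ∈ S, Q c) * (∑ c ∈ S, Q c) := by
          rw [Finset.sum_mul_sum, Finset.sum_product]
        have hdiag : ∑ p ∈ S.diag, Q p.1 * Q p.2 = (S.card : ℝ) := by
          rw [Finset.sum_diag]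
          rw [Finset.sum_congr rfl (fun c _ => hQsq c), Finset.sum_const, nsmul_eq_mul, mul_one]
        have hsplit : ∑ p ∈ S ×ˢ S, Q p.1 * Q p.2
            = ∑ p ∈ S.diag, Q p.1 * Q p.2 + ∑ p ∈ S.offDiag, Q p.1 * Q p.2 := by
          rw [← Finset.sum_union (Finset.disjoint_diag_offDiag S), Finset.diag_union_offDiag]
        rw [hprod, hdiag, hS0, hmR] at hsplit
        have := hQsq 0
        nlinarith [hsplit]
      rw [key, hoffR, hsum_off]
      field_simp
      ring

lemma imb_cast {n : ℕ} (f : (Fin n → ZMod 2) → ZMod 2) :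
    ((imb f : ℝ)) = ∑ a : Fin n → ZMod 2, ((-1:ℝ)) ^ (f a).val := by
  rw [imb]
  push_cast
  rfl



/-- Second-moment identity over `GL_n` for balanced `q`:
`Σ_{A ∈ GL_n} W_q(f)(A)² = |GL_n| · (2^{2n} - I_f²)/(2^n - 1)`, where
`|GL_n| = ∏_{i<n} (2^n - 2^i)`. -/
theorem second_moment (n : ℕ) (hn : 0 < n)
    (q : (Fin n → ZMod 2) → ZMod 2) (hq : wt q = 2 ^ (n - 1))
    (f : (Fin n → ZMod 2) → ZMod 2) :
    (∑ A : GL (Fin n) (ZMod 2), ((Wq q f A.val : ℝ)) ^ 2) =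
        (Nat.card (GL (Fin n) (ZMod 2)) : ℝ) *
          (((2 : ℝ) ^ (2 * n) - (imb f : ℝ) ^ 2) / ((2 : ℝ) ^ n - 1)) ∧
      Nat.card (GL (Fin n) (ZMod 2)) = ∏ i ∈ Finset.range n, (2 ^ n - 2 ^ i) := by
    classical
  have hm0 : ((2:ℝ)^n - 1) ≠ 0 := by
    have : (2:ℝ)^n ≥ 2^1 := by
      apply pow_le_pow_right₀ (by norm_num) (by omega)
    norm_num at this ⊢
    nlinarith
  constructor
  · set F : (Fin n → ZMod 2) → ℝ := fun a => ((-1:ℝ)) ^ (f a).val with hF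
    set Q : (Fin n → ZMod 2) → ℝ := fun c => ((-1:ℝ)) ^ (q c).val with hQv
    have hbal := balanced_sum hn q hq
    have step1 : ∀ A : GL (Fin n) (ZMod 2),
        ((Wq q f A.val : ℝ)) = ∑ a : Fin n → ZMod 2, F a * Q (Matrix.vecMul a A.val) := by
      intro A
      rw [Wq]
      push_cast
      exact Finset.sum_congr rfl fun a _ => hsign _ _
    have step2 : (∑ A : GL (Fin n) (ZMod 2), ((Wq q f A.val : ℝ)) ^ 2)
        = ∑ a : Fin n → ZMod 2, ∑ b : Fin n → ZMod 2, F a * F b *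
            (∑ A : GL (Fin n) (ZMod 2), Q (Matrix.vecMul a A.val) * Q (Matrix.vecMul b A.val)) := by
      have e1 : ∀ A : GL (Fin n) (ZMod 2), ((Wq q f A.val : ℝ)) ^ 2
          = ∑ a : Fin n → ZMod 2, ∑ b : Fin n → ZMod 2,
              (F a * Q (Matrix.vecMul a A.val)) * (F b * Q (Matrix.vecMul b A.val)) := by
        intro A
        rw [step1 A, sq, Finset.sum_mul_sum]
      rw [Finset.sum_congr rfl fun A _ => e1 A, Finset.sum_comm]
      refine Finset.sum_congr rfl fun a _ => ?_
      rw [Finset.sum_comm]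
      simp only [Finset.mul_sum]
      exact Finset.sum_congr rfl fun b _ => Finset.sum_congr rfl fun A _ => by ring
    have hTdiag : ∀ a : Fin n → ZMod 2,
        (∑ A : GL (Fin n) (ZMod 2), Q (Matrix.vecMul a A.val) * Q (Matrix.vecMul a A.val))
          = (Fintype.card (GL (Fin n) (ZMod 2)) : ℝ) := by
      intro a
      rw [Finset.sum_congr rfl fun A _ => hsq ((q (Matrix.vecMul a A.val)).val),
        Finset.sum_const, nsmul_eq_mul, mul_one, Finset.card_univ]
    have hT : ∀ a b : Fin n → ZMod 2,
        (∑ A : GL (Fin n) (ZMod 2), Q (Matrix.vecMul a A.val) * Q (Matrix.vecMul b A.val))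
          = (if a = b then (Fintype.card (GL (Fin n) (ZMod 2)) : ℝ)
              + (Fintype.card (GL (Fin n) (ZMod 2)) : ℝ) / ((2:ℝ)^n - 1) else 0)
            - (Fintype.card (GL (Fin n) (ZMod 2)) : ℝ) / ((2:ℝ)^n - 1) := by
      intro a b
      by_cases hab : a = b
      · rw [if_pos hab, hab, hTdiag b]; ring
      · rw [if_neg hab, T_offdiag hn q hbal hab]; ring
    rw [step2, Finset.sum_congr rfl fun a _ => Finset.sum_congr rfl fun b _ => by rw [hT a b]]
    set N : ℝ := (Fintype.card (GL (Fin n) (ZMod 2)) : ℝ) with hN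
    set m : ℝ := (2:ℝ)^n - 1 with hm
    have expand : ∑ a : Fin n → ZMod 2, ∑ b : Fin n → ZMod 2,
        F a * F b * ((if a = b then N + N / m else 0) - N / m)
        = (∑ a : Fin n → ZMod 2, ∑ b : Fin n → ZMod 2,
            (if a = b then F a * F b * (N + N / m) else 0))
          - N / m * ((∑ a : Fin n → ZMod 2, F a) * (∑ b : Fin n → ZMod 2, F b)) := by
      rw [Finset.sum_mul_sum, Finset.mul_sum, ← Finset.sum_sub_distrib]
      refine Finset.sum_congr rfl fun a _ => ?_
      rw [Finset.mul_sum, ← Finset.sum_sub_distrib]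
      refine Finset.sum_congr rfl fun b _ => ?_
      by_cases hab : a = b <;> simp [hab] <;> ring
    rw [expand]
    have diagsum : ∑ a : Fin n → ZMod 2, ∑ b : Fin n → ZMod 2,
        (if a = b then F a * F b * (N + N / m) else 0) = (2:ℝ)^n * (N + N / m) := by
      have e2 : ∀ a : Fin n → ZMod 2, (∑ b : Fin n → ZMod 2,
          if a = b then F a * F b * (N + N / m) else 0) = N + N / m := by
        intro a
        rw [Finset.sum_ite_eq _ a (fun b => F a * F b * (N + N / m)), if_pos (Finset.mem_univ a),
          hF, hsq ((f a).val)]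
        ring
      rw [Finset.sum_congr rfl fun a _ => e2 a, Finset.sum_const, nsmul_eq_mul,
        Finset.card_univ]
      congr 1
      simp [Fintype.card_fun]
    rw [diagsum, ← imb_cast f, Nat.card_eq_fintype_card]
    rw [hm, hN]
    have h22 : (2:ℝ)^(2*n) = (2:ℝ)^n * (2:ℝ)^n := by rw [two_mul, pow_add]
    rw [h22]
    have hm0' : ((2:ℝ)^n - 1) ≠ 0 := hm0
    field_simp
    ring
  · rw [Matrix.card_GL_field]
    have h2 : Fintype.card (ZMod 2) = 2 := by simp
    simp only [h2]
    exact Fin.prod_univ_eq_prod_range (fun i => 2 ^ n - 2 ^ i) n
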